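/- (j* annihilates the image of ∇*.) Assume F has the du Bois-Reymond property (φ·ψ ∈ Div F^M for all ψ ∈ F implies φ = 0) and that ∇ ∘ j = 0, i.e. (∇(jφ))^a_μ = 0 for every φ ∈ F^{A′}, a ∈ A, μ ∈ M. Then j*(∇*χ) = 0 for every finitely supported χ ∈ F̄^M_A. -/

import Mathlib

noncomputable section

variable {𝔽 : Type*} [Field 𝔽] {F : Type*} [CommRing F] [Algebra 𝔽 F] {m : ℕ}
  {A A' : Type*}

/-- Membership in the space of divergences `Div F^M = {Σ_μ D_μ ψ^μ}`. -/
def IsDiv (D : Fin m → Derivation 𝔽 F F) (f : F) : Prop :=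
  ∃ ψ : Fin m → F, f = ∑ μ, D μ (ψ μ)

/-- The evolutionary differentiation `ev_φ f = Σ_a φ^a · ∂_a f` (a finite sum). -/
def ev (pa : A → Derivation 𝔽 F F) (φ : A → F) (f : F) : F :=
  ∑ᶠ a, φ a * pa a f

/-- `(∇φ)^a_μ = D_μ φ^a + Σ_b Γ^a_{μb} · φ^b`; here `Γ b μ a` denotes `Γ^b_{μa}`. -/
def nabla (D : Fin m → Derivation 𝔽 F F) (Γ : A → Fin m → A → F)
    (φ : A → F) (a : A) (μ : Fin m) : F :=
  D μ (φ a) + ∑ᶠ b, Γ a μ b * φ b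

/-- `(∇*χ)_a = -Σ_μ D_μ χ^μ_a + Σ_{μ,b} Γ^b_{μa} · χ^μ_b`. -/
def nablaStar (D : Fin m → Derivation 𝔽 F F) (Γ : A → Fin m → A → F)
    (χ : Fin m → A → F) (a : A) : F :=
  -∑ μ, D μ (χ μ a) + ∑ᶠ b, ∑ μ, Γ b μ a * χ μ b

/-- The pairing `⟨f, φ⟩ = Σ_a f_a · φ^a`. -/
def pair (f φ : A → F) : F := ∑ᶠ a, f a * φ a

/-- `D^i = D_1^{i^1} ∘ ⋯ ∘ D_m^{i^m}`. -/
def Dpow (D : Fin m → Derivation 𝔽 F F) (i : Fin m → ℕ) : F → F :=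
  (List.finRange m).foldr (fun μ g => (⇑(D μ))^[i μ] ∘ g) id

/-- `|i| = i^1 + ⋯ + i^m`. -/
def msize {m : ℕ} (i : Fin m → ℕ) : ℕ := ∑ μ, i μ

/-- The differential operator `P(D)L = Σ_i P_i · D^i L`. -/
def applyP (D : Fin m → Derivation 𝔽 F F) (P : (Fin m → ℕ) → F) (L : F) : F :=
  ∑ᶠ i, P i * Dpow D i L

/-- The Lagrange dual operator `P*(D)K = Σ_i (-1)^{|i|} D^i (P_i · K)`. -/
def applyPstar (D : Fin m → Derivation 𝔽 F F) (P : (Fin m → ℕ) → F) (K : F) : F :=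
  ∑ᶠ i, (-1 : F) ^ msize i * Dpow D i (P i * K)

/-- The jet map `(jφ)^a = Σ_{i,α} j^a_{iα} · D^i φ^α`; here `jc a i α` denotes `j^a_{iα}`. -/
def jmap (D : Fin m → Derivation 𝔽 F F) (jc : A → (Fin m → ℕ) → A' → F)
    (φ : A' → F) (a : A) : F :=
  ∑ᶠ i, ∑ᶠ α, jc a i α * Dpow D i (φ α)

/-- The Lagrange dual `(j*f)_α = Σ_{a,i} (-1)^{|i|} D^i (j^a_{iα} · f_a)`. -/
def jstar (D : Fin m → Derivation 𝔽 F F) (jc : A → (Fin m → ℕ) → A' → F)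
    (f : A → F) (α : A') : F :=
  ∑ᶠ a, ∑ᶠ i, (-1 : F) ^ msize i * Dpow D i (jc a i α * f a)

/-- `(Λf)^α = Σ_{β,i} Λ^{αβ}_i · D^i f_β`; here `Λc α β i` denotes `Λ^{αβ}_i`. -/
def Lam (D : Fin m → Derivation 𝔽 F F) (Λc : A' → A' → (Fin m → ℕ) → F)
    (f : A' → F) (α : A') : F :=
  ∑ᶠ β, ∑ᶠ i, Λc α β i * Dpow D i (f β)

/-- The Lagrange dual `(Λ*f)^α = Σ_{β,i} (-1)^{|i|} D^i (Λ^{βα}_i · f_β)`. -/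
def LamStar (D : Fin m → Derivation 𝔽 F F) (Λc : A' → A' → (Fin m → ℕ) → F)
    (f : A' → F) (α : A') : F :=
  ∑ᶠ β, ∑ᶠ i, (-1 : F) ^ msize i * Dpow D i (Λc β α i * f β)

/-- The variational derivative `δR = j*(∂R)`, where `∂R = (∂_a R)`. -/
def vard (D : Fin m → Derivation 𝔽 F F) (pa : A → Derivation 𝔽 F F)
    (jc : A → (Fin m → ℕ) → A' → F) (R : F) : A' → F :=
  jstar D jc (fun a => pa a R)

/-- The Hamiltonian vector `φ(R) = j(Λ(δR))`. -/
def hamv (D : Fin m → Derivation 𝔽 F F) (pa : A → Derivation 𝔽 F F)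
    (jc : A → (Fin m → ℕ) → A' → F) (Λc : A' → A' → (Fin m → ℕ) → F) (R : F) : A → F :=
  jmap D jc (Lam D Λc (vard D pa jc R))

/-- The commutator `[ev_ψ, Λ]`, acting with coefficients `ev_ψ(Λ^{αβ}_i)`. -/
def evLam (D : Fin m → Derivation 𝔽 F F) (pa : A → Derivation 𝔽 F F)
    (Λc : A' → A' → (Fin m → ℕ) → F) (ψ : A → F) (f : A' → F) (α : A') : F :=
  ∑ᶠ β, ∑ᶠ i, ev pa ψ (Λc α β i) * Dpow D i (f β)

section AuxLemmas

variable {𝔽 : Type*} [Field 𝔽] {F : Type*} [CommRing F] [Algebra 𝔽 F] {m : ℕ}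
variable (D : Fin m → Derivation 𝔽 F F)

lemma isDiv_zero : IsDiv D 0 := ⟨0, by simp⟩

lemma isDiv_add {f g : F} (hf : IsDiv D f) (hg : IsDiv D g) : IsDiv D (f + g) := by
  obtain ⟨p, hp⟩ := hf; obtain ⟨q, hq⟩ := hg
  exact ⟨p + q, by simp [hp, hq, Finset.sum_add_distrib]⟩

lemma isDiv_neg {f : F} (hf : IsDiv D f) : IsDiv D (-f) := by
  obtain ⟨p, hp⟩ := hf
  exact ⟨-p, by simp [hp, Finset.sum_neg_distrib]⟩

lemma isDiv_sub {f g : F} (hf : IsDiv D f) (hg : IsDiv D g) : IsDiv D (f - g) := by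
  rw [sub_eq_add_neg]; exact isDiv_add D hf (isDiv_neg D hg)

lemma isDiv_D (μ : Fin m) (ψ : F) : IsDiv D (D μ ψ) := by
  refine ⟨Pi.single μ ψ, ?_⟩
  rw [Finset.sum_eq_single μ]
  · simp
  · intro ν _ hν; simp [Pi.single_eq_of_ne hν]
  · simp

lemma isDiv_sum {ι : Type*} (s : Finset ι) (f : ι → F) (h : ∀ x ∈ s, IsDiv D (f x)) :
    IsDiv D (∑ x ∈ s, f x) := by
  classical
  induction s using Finset.induction_on with
  | empty => simpa using isDiv_zero D
  | insert _ _ hx ih =>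
    rw [Finset.sum_insert hx]
    exact isDiv_add D (h _ (Finset.mem_insert_self _ _))
      (ih fun x hxs => h x (Finset.mem_insert_of_mem hxs))

lemma isDiv_neg_one_pow (n : ℕ) {f : F} (hf : IsDiv D f) : IsDiv D ((-1) ^ n * f) := by
  rcases Nat.even_or_odd n with h | h
  · rw [h.neg_one_pow, one_mul]; exact hf
  · rw [h.neg_one_pow, neg_one_mul]; exact isDiv_neg D hf

lemma ibp1 (μ : Fin m) (g h : F) : IsDiv D (D μ g * h + g * D μ h) := by
  have : D μ g * h + g * D μ h = D μ (g * h) := by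
    rw [Derivation.leibniz]; simp [smul_eq_mul]; ring
  rw [this]; exact isDiv_D D μ _

lemma ibp_pow (μ : Fin m) (n : ℕ) (g h : F) :
    IsDiv D ((⇑(D μ))^[n] g * h - (-1) ^ n * (g * (⇑(D μ))^[n] h)) := by
  induction n generalizing g h with
  | zero => simpa using isDiv_zero D
  | succ n ih =>
    have h1 := ih (D μ g) h
    have h2 := isDiv_neg_one_pow D n (ibp1 D μ g ((⇑(D μ))^[n] h))
    have hsum := isDiv_add D h1 h2
    have key : (⇑(D μ))^[n] (D μ g) * h - (-1) ^ n * (D μ g * (⇑(D μ))^[n] h) +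
        (-1) ^ n * (D μ g * (⇑(D μ))^[n] h + g * D μ ((⇑(D μ))^[n] h)) =
        (⇑(D μ))^[n + 1] g * h - (-1) ^ (n + 1) * (g * (⇑(D μ))^[n + 1] h) := by
      rw [Function.iterate_succ_apply, Function.iterate_succ_apply']
      ring
    rwa [key] at hsum

lemma comm_pow (hDcomm : ∀ μ ν (f : F), D μ (D ν f) = D ν (D μ f))
    (μ ν : Fin m) (n : ℕ) (x : F) :
    (⇑(D ν))^[n] (D μ x) = D μ ((⇑(D ν))^[n] x) := by
  induction n with
  | zero => rfl
  | succ n ih => rw [Function.iterate_succ_apply', Function.iterate_succ_apply', ih, hDcomm]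

/-- auxiliary list version of `Dpow`. -/
def DL (l : List (Fin m)) (i : Fin m → ℕ) : F → F :=
  l.foldr (fun μ g => (⇑(D μ))^[i μ] ∘ g) id

lemma comm_DL (hDcomm : ∀ μ ν (f : F), D μ (D ν f) = D ν (D μ f))
    (μ : Fin m) (l : List (Fin m)) (i : Fin m → ℕ) (x : F) :
    DL D l i (D μ x) = D μ (DL D l i x) := by
  induction l generalizing x with
  | nil => rfl
  | cons ν l ih =>
    show (⇑(D ν))^[i ν] (DL D l i (D μ x)) = D μ ((⇑(D ν))^[i ν] (DL D l i x))
    rw [ih, comm_pow D hDcomm]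

lemma comm_DL_pow (hDcomm : ∀ μ ν (f : F), D μ (D ν f) = D ν (D μ f))
    (μ : Fin m) (n : ℕ) (l : List (Fin m)) (i : Fin m → ℕ) (x : F) :
    DL D l i ((⇑(D μ))^[n] x) = (⇑(D μ))^[n] (DL D l i x) := by
  induction n generalizing x with
  | zero => rfl
  | succ n ih =>
    rw [Function.iterate_succ_apply, Function.iterate_succ_apply, ih, comm_DL D hDcomm]

lemma ibp_list (hDcomm : ∀ μ ν (f : F), D μ (D ν f) = D ν (D μ f))
    (l : List (Fin m)) (i : Fin m → ℕ) (g h : F) :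
    IsDiv D (DL D l i g * h - (-1) ^ ((l.map i).sum) * (g * DL D l i h)) := by
  induction l generalizing h with
  | nil => simpa [DL] using isDiv_zero D
  | cons μ l ih =>
    have h1 := ibp_pow D μ (i μ) (DL D l i g) h
    have h2 := isDiv_neg_one_pow D (i μ) (ih ((⇑(D μ))^[i μ] h))
    have hsum := isDiv_add D h1 h2
    have key : (⇑(D μ))^[i μ] (DL D l i g) * h -
          (-1) ^ (i μ) * (DL D l i g * (⇑(D μ))^[i μ] h) +
        (-1) ^ (i μ) * (DL D l i g * (⇑(D μ))^[i μ] h -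
          (-1) ^ ((l.map i).sum) * (g * DL D l i ((⇑(D μ))^[i μ] h))) =
        DL D (μ :: l) i g * h -
          (-1) ^ (((μ :: l).map i).sum) * (g * DL D (μ :: l) i h) := by
      have e1 : DL D (μ :: l) i g = (⇑(D μ))^[i μ] (DL D l i g) := rfl
      have e2 : DL D (μ :: l) i h = (⇑(D μ))^[i μ] (DL D l i h) := rfl
      rw [e1, e2, List.map_cons, List.sum_cons, pow_add, comm_DL_pow D hDcomm]
      ring
    rwa [key] at hsum

lemma ibp_Dpow (hDcomm : ∀ μ ν (f : F), D μ (D ν f) = D ν (D μ f))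
    (i : Fin m → ℕ) (g h : F) :
    IsDiv D (Dpow D i g * h - (-1) ^ (msize i) * (g * Dpow D i h)) := by
  have e : Dpow D i = DL D (List.finRange m) i := rfl
  have e2 : msize i = ((List.finRange m).map i).sum := by
    rw [msize, Fin.sum_univ_def]
  rw [e, e2]
  exact ibp_list D hDcomm _ i g h

lemma Dpow_zero_apply (i : Fin m → ℕ) : Dpow D i (0 : F) = 0 := by
  show DL D (List.finRange m) i (0 : F) = 0
  induction List.finRange m with
  | nil => rfl
  | cons μ l ih =>
    show (⇑(D μ))^[i μ] (DL D l i (0:F)) = 0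
    rw [ih]
    induction i μ with
    | zero => rfl
    | succ n ihn => rw [Function.iterate_succ_apply', ihn, map_zero]

end AuxLemmas

/-- `j*` annihilates the image of `∇*`: assuming the
du Bois-Reymond property and `∇ ∘ j = 0`, one has `j*(∇*χ) = 0` for every
finitely supported `χ`. -/
theorem stmt_10
    {𝔽 : Type*} [Field 𝔽] [CharZero 𝔽] {F : Type*} [CommRing F] [Algebra 𝔽 F]
    {m : ℕ} {A A' : Type*}
    (D : Fin m → Derivation 𝔽 F F)
    (hDcomm : ∀ μ ν (f : F), D μ (D ν f) = D ν (D μ f))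
    (Γ : A → Fin m → A → F)
    (hΓfin : ∀ b : A, {p : Fin m × A | Γ b p.1 p.2 ≠ 0}.Finite)
    (hdBR : ∀ φ : F, (∀ ψ : F, IsDiv D (φ * ψ)) → φ = 0)
    (jc : A → (Fin m → ℕ) → A' → F)
    (hjfin : ∀ a : A, {p : (Fin m → ℕ) × A' | jc a p.1 p.2 ≠ 0}.Finite)
    (hnj : ∀ (φ : A' → F) (a : A) (μ : Fin m), nabla D Γ (jmap D jc φ) a μ = 0)
    (χ : Fin m → A → F)
    (hχfin : {p : Fin m × A | χ p.1 p.2 ≠ 0}.Finite) :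
    ∀ α : A', jstar D jc (nablaStar D Γ χ) α = 0 := by
  classical
  intro α
  apply hdBR
  intro ψ
  set f : A → F := nablaStar D Γ χ with hfdef
  set Aχ : Finset A := hχfin.toFinset.image Prod.snd with hAχdef
  set Sa : Finset A :=
    Aχ ∪ Aχ.biUnion (fun b => (hΓfin b).toFinset.image Prod.snd) with hSadef
  set Ia : A → Finset (Fin m → ℕ) := fun a => (hjfin a).toFinset.image Prod.fst with hIadef
  set Ga : A → Finset A := fun a => (hΓfin a).toFinset.image Prod.snd with hGadef
  -- basic vanishing facts
  have hχ0 : ∀ (μ : Fin m) (a : A), a ∉ Aχ → χ μ a = 0 := by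
    intro μ a ha
    by_contra h
    exact ha (Finset.mem_image.mpr ⟨(μ, a), hχfin.mem_toFinset.mpr h, rfl⟩)
  have hΓ0 : ∀ (b : A) (μ : Fin m) (a : A), a ∉ Ga b → Γ b μ a = 0 := by
    intro b μ a ha
    by_contra h
    exact ha (Finset.mem_image.mpr ⟨(μ, a), (hΓfin b).mem_toFinset.mpr h, rfl⟩)
  have hjc0 : ∀ (a : A) (i : Fin m → ℕ), i ∉ Ia a → jc a i α = 0 := by
    intro a i hi
    by_contra h
    exact hi (Finset.mem_image.mpr ⟨(i, α), (hjfin a).mem_toFinset.mpr h, rfl⟩)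
  have hAχSa : Aχ ⊆ Sa := Finset.subset_union_left
  have hGaSa : ∀ b ∈ Aχ, Ga b ⊆ Sa := by
    intro b hb a ha
    exact Finset.mem_union_right _ (Finset.mem_biUnion.mpr ⟨b, hb, ha⟩)
  have hf0 : ∀ a, a ∉ Sa → f a = 0 := by
    intro a ha
    have hne : a ∉ Aχ := fun h => ha (hAχSa h)
    have t1 : ∀ μ : Fin m, χ μ a = 0 := fun μ => hχ0 μ a hne
    have t2 : ∀ b : A, ∑ μ, Γ b μ a * χ μ b = 0 := by
      intro b
      apply Finset.sum_eq_zero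
      intro μ _
      by_cases hb : χ μ b = 0
      · rw [hb, mul_zero]
      · have hbA : b ∈ Aχ := Finset.mem_image.mpr ⟨(μ, b), hχfin.mem_toFinset.mpr hb, rfl⟩
        have hz : Γ b μ a = 0 := by
          by_contra hΓ
          have haG : a ∈ Ga b :=
            Finset.mem_image.mpr ⟨(μ, a), (hΓfin b).mem_toFinset.mpr hΓ, rfl⟩
          exact ha (hGaSa b hbA haG)
        rw [hz, zero_mul]
    rw [hfdef]
    show -∑ μ, D μ (χ μ a) + ∑ᶠ b, ∑ μ, Γ b μ a * χ μ b = 0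
    rw [finsum_eq_zero_of_forall_eq_zero t2]
    simp [t1]
  -- the test function and its image under j
  set φ : A' → F := fun α' => if α' = α then ψ else 0 with hφdef
  set u : A → F := jmap D jc φ with hudef
  have hu : ∀ a, u a = ∑ i ∈ Ia a, jc a i α * Dpow D i ψ := by
    intro a
    rw [hudef]
    show (∑ᶠ i, ∑ᶠ α', jc a i α' * Dpow D i (φ α')) = _
    have inner : ∀ i, (∑ᶠ α', jc a i α' * Dpow D i (φ α')) = jc a i α * Dpow D i ψ := by
      intro i
      rw [finsum_eq_single _ α]
      · simp [hφdef]
      · intro α' hα'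
        simp [hφdef, hα', Dpow_zero_apply]
    rw [finsum_congr inner]
    apply finsum_eq_sum_of_support_subset
    intro i hi
    simp only [Function.mem_support] at hi
    by_contra hmem
    exact hi (by rw [hjc0 a i hmem, zero_mul])
  have hDu : ∀ (a : A) (μ : Fin m), D μ (u a) = -∑ᶠ b, Γ a μ b * u b := by
    intro a μ
    have h := hnj φ a μ
    simp only [nabla] at h
    rw [hudef]
    exact eq_neg_of_add_eq_zero_left h
  have hfinΓu : ∀ (a : A) (μ : Fin m),
      (∑ᶠ b, Γ a μ b * u b) = ∑ b ∈ Ga a, Γ a μ b * u b := by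
    intro a μ
    apply finsum_eq_sum_of_support_subset
    intro b hb
    simp only [Function.mem_support] at hb
    by_contra hmem
    exact hb (by rw [hΓ0 a μ b hmem, zero_mul])
  -- expand jstar as a finite double sum
  have e1 : jstar D jc f α =
      ∑ a ∈ Sa, ∑ i ∈ Ia a, (-1 : F) ^ msize i * Dpow D i (jc a i α * f a) := by
    show (∑ᶠ a, ∑ᶠ i, (-1 : F) ^ msize i * Dpow D i (jc a i α * f a)) = _
    have houter : Function.support
        (fun a => ∑ᶠ i, (-1 : F) ^ msize i * Dpow D i (jc a i α * f a)) ⊆ ↑Sa := by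
      intro a ha
      simp only [Function.mem_support] at ha
      by_contra hmem
      apply ha
      apply finsum_eq_zero_of_forall_eq_zero
      intro i
      rw [hf0 a hmem, mul_zero, Dpow_zero_apply, mul_zero]
    rw [finsum_eq_sum_of_support_subset _ houter]
    apply Finset.sum_congr rfl
    intro a _
    apply finsum_eq_sum_of_support_subset
    intro i hi
    simp only [Function.mem_support] at hi
    by_contra hmem
    exact hi (by rw [hjc0 a i hmem, zero_mul, Dpow_zero_apply, mul_zero])
  -- inner rewriting of the second part
  have hT2 : (∑ a ∈ Sa, ∑ i ∈ Ia a, jc a i α * f a * Dpow D i ψ) =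
      ∑ a ∈ Sa, f a * u a := by
    apply Finset.sum_congr rfl
    intro a _
    rw [hu a, Finset.mul_sum]
    apply Finset.sum_congr rfl
    intro i _
    ring
  have hB : (∑ a ∈ Sa, f a * u a) =
      (∑ a ∈ Sa, (-∑ μ, D μ (χ μ a)) * u a) +
        ∑ a ∈ Sa, (∑ᶠ b, ∑ μ, Γ b μ a * χ μ b) * u a := by
    rw [← Finset.sum_add_distrib]
    apply Finset.sum_congr rfl
    intro a _
    rw [hfdef]
    show (-∑ μ, D μ (χ μ a) + ∑ᶠ b, ∑ μ, Γ b μ a * χ μ b) * u a = _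
    rw [add_mul]
  -- the Γ-part of ∇* cancels against the Γ-part coming from ∇∘j = 0
  have hB2 : (∑ a ∈ Sa, (∑ᶠ b, ∑ μ, Γ b μ a * χ μ b) * u a) =
      -∑ a ∈ Sa, ∑ μ, χ μ a * D μ (u a) := by
    have hC : (∑ a ∈ Sa, ∑ μ, χ μ a * D μ (u a)) =
        -∑ b ∈ Sa, ∑ μ, ∑ a ∈ Ga b, χ μ b * (Γ b μ a * u a) := by
      rw [← Finset.sum_neg_distrib]
      apply Finset.sum_congr rfl
      intro b _
      rw [← Finset.sum_neg_distrib]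
      apply Finset.sum_congr rfl
      intro μ _
      rw [hDu b μ, hfinΓu b μ, mul_neg, Finset.mul_sum]
    have hmid : (∑ b ∈ Sa, ∑ μ, ∑ a ∈ Ga b, χ μ b * (Γ b μ a * u a)) =
        ∑ a ∈ Sa, (∑ᶠ b, ∑ μ, Γ b μ a * χ μ b) * u a := by
      calc (∑ b ∈ Sa, ∑ μ, ∑ a ∈ Ga b, χ μ b * (Γ b μ a * u a))
          = ∑ b ∈ Aχ, ∑ μ, ∑ a ∈ Ga b, χ μ b * (Γ b μ a * u a) := by
            rw [Finset.sum_subset hAχSa]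
            intro b _ hb
            apply Finset.sum_eq_zero
            intro μ _
            apply Finset.sum_eq_zero
            intro a _
            rw [hχ0 μ b hb, zero_mul]
        _ = ∑ b ∈ Aχ, ∑ μ, ∑ a ∈ Sa, χ μ b * (Γ b μ a * u a) := by
            apply Finset.sum_congr rfl
            intro b hb
            apply Finset.sum_congr rfl
            intro μ _
            rw [Finset.sum_subset (hGaSa b hb)]
            intro a _ ha
            rw [hΓ0 b μ a ha, zero_mul, mul_zero]
        _ = ∑ b ∈ Aχ, ∑ a ∈ Sa, ∑ μ, χ μ b * (Γ b μ a * u a) := by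
            apply Finset.sum_congr rfl
            intro b _
            exact Finset.sum_comm
        _ = ∑ a ∈ Sa, ∑ b ∈ Aχ, ∑ μ, χ μ b * (Γ b μ a * u a) := Finset.sum_comm
        _ = ∑ a ∈ Sa, (∑ᶠ b, ∑ μ, Γ b μ a * χ μ b) * u a := by
            apply Finset.sum_congr rfl
            intro a _
            have hsupp : Function.support (fun b => ∑ μ, Γ b μ a * χ μ b) ⊆ ↑Aχ := by
              intro b hb
              simp only [Function.mem_support] at hb
              by_contra hmem
              apply hb
              apply Finset.sum_eq_zero
              intro μ _
              rw [hχ0 μ b hmem, mul_zero]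
            rw [finsum_eq_sum_of_support_subset _ hsupp, Finset.sum_mul]
            apply Finset.sum_congr rfl
            intro b _
            rw [Finset.sum_mul]
            apply Finset.sum_congr rfl
            intro μ _
            ring
    rw [hC, neg_neg, hmid]
  -- assemble everything
  have key : jstar D jc f α * ψ =
      (∑ a ∈ Sa, ∑ i ∈ Ia a,
        ((-1 : F) ^ msize i * Dpow D i (jc a i α * f a) * ψ -
          jc a i α * f a * Dpow D i ψ)) +
      ((∑ a ∈ Sa, (-∑ μ, D μ (χ μ a)) * u a) -
        ∑ a ∈ Sa, ∑ μ, χ μ a * D μ (u a)) := by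
    calc jstar D jc f α * ψ
        = ∑ a ∈ Sa, ∑ i ∈ Ia a,
            (-1 : F) ^ msize i * Dpow D i (jc a i α * f a) * ψ := by
          rw [e1, Finset.sum_mul]
          apply Finset.sum_congr rfl
          intro a _
          rw [Finset.sum_mul]
      _ = (∑ a ∈ Sa, ∑ i ∈ Ia a,
            ((-1 : F) ^ msize i * Dpow D i (jc a i α * f a) * ψ -
              jc a i α * f a * Dpow D i ψ)) +
          ∑ a ∈ Sa, ∑ i ∈ Ia a, jc a i α * f a * Dpow D i ψ := by
          rw [← Finset.sum_add_distrib]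
          apply Finset.sum_congr rfl
          intro a _
          rw [← Finset.sum_add_distrib]
          apply Finset.sum_congr rfl
          intro i _
          ring
      _ = _ := by
          rw [hT2, hB, hB2]
          ring
  rw [key]
  refine isDiv_add D ?_ ?_
  · apply isDiv_sum
    intro a _
    apply isDiv_sum
    intro i _
    have h1 := isDiv_neg_one_pow D (msize i) (ibp_Dpow D hDcomm i (jc a i α * f a) ψ)
    have hsq : (-1 : F) ^ msize i * (-1 : F) ^ msize i = 1 := by
      rw [← pow_add]
      exact Even.neg_one_pow ⟨msize i, rfl⟩
    have heq : (-1 : F) ^ msize i *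
        (Dpow D i (jc a i α * f a) * ψ -
          (-1 : F) ^ msize i * (jc a i α * f a * Dpow D i ψ)) =
        (-1 : F) ^ msize i * Dpow D i (jc a i α * f a) * ψ -
          jc a i α * f a * Dpow D i ψ := by
      linear_combination (-(jc a i α * f a * Dpow D i ψ)) * hsq
    rwa [heq] at h1
  · rw [← Finset.sum_sub_distrib]
    apply isDiv_sum
    intro a _
    have heq : (-∑ μ, D μ (χ μ a)) * u a - ∑ μ, χ μ a * D μ (u a) =
        -∑ μ, (D μ (χ μ a) * u a + χ μ a * D μ (u a)) := by
      rw [Finset.sum_add_distrib, neg_mul, Finset.sum_mul]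
      ring
    rw [heq]
    exact isDiv_neg D (isDiv_sum D _ _ fun μ _ => ibp1 D μ (χ μ a) (u a))
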